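/- With V, Φ, Φ⁺, Δ, the root lattice Q, the weight lattice P, dominant weights and the dominance order as in the context: if λ₁, λ₂ ∈ P are dominant weights with λ₁ − λ₂ ∈ Q, then there exists a dominant weight μ ∈ P with μ ≤ λ₁ and μ ≤ λ₂, i.e. both λ₁ − μ and λ₂ − μ are ℤ≥0-linear combinations of simple roots. -/

import Mathlib

open scoped RealInnerProductSpace

namespace DWCLB

variable {V : Type*} [NormedAddCommGroup V] [InnerProductSpace ℝ V]

lemma inner_self_pos_of_mem {Φ : Finset V} (h0 : (0 : V) ∉ Φ) {α : V} (hα : α ∈ Φ) :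
    0 < ⟪α, α⟫ := by
  have hne : α ≠ 0 := fun h => h0 (h ▸ hα)
  exact lt_of_le_of_ne real_inner_self_nonneg
    (fun h => hne (inner_self_eq_zero.mp h.symm))

lemma neg_mem_of_mem {Φ : Finset V} (h0 : (0 : V) ∉ Φ)
    (hrefl : ∀ α ∈ Φ, ∀ β ∈ Φ, β - (2 * ⟪β, α⟫ / ⟪α, α⟫) • α ∈ Φ)
    {α : V} (hα : α ∈ Φ) : -α ∈ Φ := by
  have h := hrefl α hα α hα
  have hA : ⟪α, α⟫ ≠ 0 := ne_of_gt (inner_self_pos_of_mem h0 hα)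
  rw [mul_div_assoc, div_self hA, mul_one] at h
  have : α - (2 : ℝ) • α = -α := by
    rw [two_smul]; abel
  rwa [this] at h

/-- If `α, β ∈ Φ`, `⟪α,β⟫ < 0` and `α + β ≠ 0`, then `α + β ∈ Φ`. -/
lemma add_mem_of_inner_neg {Φ : Finset V} (h0 : (0 : V) ∉ Φ)
    (hred : ∀ α ∈ Φ, ∀ t : ℝ, t • α ∈ Φ → t = 1 ∨ t = -1)
    (hcart : ∀ α ∈ Φ, ∀ β ∈ Φ, ∃ z : ℤ, 2 * ⟪β, α⟫ / ⟪α, α⟫ = (z : ℝ))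
    (hrefl : ∀ α ∈ Φ, ∀ β ∈ Φ, β - (2 * ⟪β, α⟫ / ⟪α, α⟫) • α ∈ Φ)
    {α β : V} (hα : α ∈ Φ) (hβ : β ∈ Φ) (hneg : ⟪α, β⟫ < 0) (hne : α + β ≠ 0) :
    α + β ∈ Φ := by
  have ha : 0 < ⟪α, α⟫ := inner_self_pos_of_mem h0 hα
  have hb : 0 < ⟪β, β⟫ := inner_self_pos_of_mem h0 hβ
  by_cases hpar : ∃ t : ℝ, β = t • α
  · obtain ⟨t, rfl⟩ := hpar
    rcases hred α hα t hβ with rfl | rfl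
    · rw [one_smul] at hneg; exact absurd hneg (not_lt.mpr ha.le)
    · exact absurd (by rw [neg_one_smul]; abel) hne
  · obtain ⟨n1, hn1⟩ := hcart β hβ α hα
    obtain ⟨n2, hn2⟩ := hcart α hα β hβ
    -- hn1 : 2 * ⟪α, β⟫ / ⟪β, β⟫ = n1,  hn2 : 2 * ⟪β, α⟫ / ⟪α, α⟫ = n2
    have hba : ⟪β, α⟫ = ⟪α, β⟫ := real_inner_comm α β
    have hn1neg : (n1 : ℝ) < 0 := by
      rw [← hn1]; exact div_neg_of_neg_of_pos (by linarith) hb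
    have hn2neg : (n2 : ℝ) < 0 := by
      rw [← hn2, hba]; exact div_neg_of_neg_of_pos (by linarith) ha
    have hn1le : n1 ≤ -1 := by
      have : n1 < 0 := by exact_mod_cast hn1neg
      omega
    have hn2le : n2 ≤ -1 := by
      have : n2 < 0 := by exact_mod_cast hn2neg
      omega
    -- strict Cauchy-Schwarz
    have hcs : ⟪α, β⟫ * ⟪α, β⟫ < ⟪α, α⟫ * ⟪β, β⟫ := by
      rcases lt_or_eq_of_le (real_inner_mul_inner_self_le α β) with h | h
      · exact h
      · exfalso
        apply hpar
        refine ⟨⟪α, β⟫ / ⟪α, α⟫, ?_⟩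
        have hexp : ⟪β - (⟪α, β⟫ / ⟪α, α⟫) • α, β - (⟪α, β⟫ / ⟪α, α⟫) • α⟫
            = ⟪β, β⟫ - 2 * (⟪α, β⟫ / ⟪α, α⟫) * ⟪α, β⟫
              + (⟪α, β⟫ / ⟪α, α⟫) * (⟪α, β⟫ / ⟪α, α⟫) * ⟪α, α⟫ := by
          simp only [inner_sub_left, inner_sub_right, real_inner_smul_left,
            real_inner_smul_right, real_inner_comm α β]
          ring
        have hzero : ⟪β - (⟪α, β⟫ / ⟪α, α⟫) • α, β - (⟪α, β⟫ / ⟪α, α⟫) • α⟫ = 0 := by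
          rw [hexp]
          field_simp
          nlinarith [h]
        have := inner_self_eq_zero.mp hzero
        rw [sub_eq_zero] at this
        exact this
    have hprod : (n1 : ℝ) * n2 < 4 := by
      rw [← hn1, ← hn2, hba]
      rw [div_mul_div_comm]
      rw [div_lt_iff₀ (by positivity)]
      nlinarith [hcs]
    have hprodZ : n1 * n2 < 4 := by exact_mod_cast hprod
    have hcase : n1 = -1 ∨ n2 = -1 := by
      by_contra hcon
      push_neg at hcon
      have h1 : n1 ≤ -2 := by omega
      have h2 : n2 ≤ -2 := by omega
      nlinarith
    rcases hcase with h | h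
    · -- n1 = -1 : use reflection in β on α
      have := hrefl β hβ α hα
      rw [hn1, h] at this
      simpa [sub_eq_add_neg, add_comm] using this
    · -- n2 = -1 : use reflection in α on β
      have := hrefl α hα β hβ
      rw [hn2, h] at this
      simpa [sub_eq_add_neg, add_comm] using this

end DWCLB

namespace DWCLB2
open DWCLB

variable {V : Type*} [NormedAddCommGroup V] [InnerProductSpace ℝ V]

lemma inner_list_sum (β : V) (T : List V) :
    ⟪β, T.sum⟫ = (T.map (fun x => ⟪β, x⟫)).sum := by
  induction T with
  | nil => simp
  | cons a t ih => simp [inner_add_right, ih]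

/-- No nonempty list of positive roots sums to zero. -/
lemma sum_ne_zero (Φ Φp : Finset V) (h0 : (0 : V) ∉ Φ)
    (hred : ∀ α ∈ Φ, ∀ t : ℝ, t • α ∈ Φ → t = 1 ∨ t = -1)
    (hcart : ∀ α ∈ Φ, ∀ β ∈ Φ, ∃ z : ℤ, 2 * ⟪β, α⟫ / ⟪α, α⟫ = (z : ℝ))
    (hrefl : ∀ α ∈ Φ, ∀ β ∈ Φ, β - (2 * ⟪β, α⟫ / ⟪α, α⟫) • α ∈ Φ)
    (hpsub : Φp ⊆ Φ)
    (hposneg : ∀ α ∈ Φ, (α ∈ Φp ∧ -α ∉ Φp) ∨ (α ∉ Φp ∧ -α ∈ Φp))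
    (hadd : ∀ α ∈ Φp, ∀ β ∈ Φp, α + β ∈ Φ → α + β ∈ Φp) :
    ∀ (n : ℕ) (L : List V), L.length = n → (∀ x ∈ L, x ∈ Φp) → L ≠ [] → L.sum ≠ 0 := by
  classical
  intro n
  induction n using Nat.strong_induction_on with
  | _ n IH =>
    intro L hlen hmem hne hsum
    match L, hne with
    | β :: T, _ =>
      have hβp : β ∈ Φp := hmem β (by simp)
      have hβΦ : β ∈ Φ := hpsub hβp
      have hβ0 : 0 < ⟪β, β⟫ := inner_self_pos_of_mem h0 hβΦ
      have hsum' : β + T.sum = 0 := by simpa using hsum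
      have hTne : T ≠ [] := by
        rintro rfl
        simp at hsum'
        exact h0 (hsum' ▸ hβΦ)
      have hinner : ⟪β, T.sum⟫ < 0 := by
        have : ⟪β, β + T.sum⟫ = 0 := by rw [hsum']; simp
        rw [inner_add_right] at this
        linarith
      have hex : ∃ γ ∈ T, ⟪β, γ⟫ < 0 := by
        by_contra hall
        push_neg at hall
        have : 0 ≤ ⟪β, T.sum⟫ := by
          rw [inner_list_sum]
          apply List.sum_nonneg
          intro x hx
          obtain ⟨γ, hγT, rfl⟩ := List.mem_map.mp hx
          exact hall γ hγT
        linarith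
      obtain ⟨γ, hγT, hγneg⟩ := hex
      have hγp : γ ∈ Φp := hmem γ (by simp [hγT])
      have hγΦ : γ ∈ Φ := hpsub hγp
      have hbγ0 : β + γ ≠ 0 := by
        intro h
        have hγ : γ = -β := by rw [eq_neg_iff_add_eq_zero, add_comm]; exact h
        rcases hposneg β hβΦ with ⟨_, hnot⟩ | ⟨hnot, _⟩
        · exact hnot (hγ ▸ hγp)
        · exact hnot hβp
      have hbγΦ : β + γ ∈ Φ := add_mem_of_inner_neg h0 hred hcart hrefl hβΦ hγΦ hγneg hbγ0
      have hbγp : β + γ ∈ Φp := hadd β hβp γ hγp hbγΦ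
      -- new list
      set L' := (β + γ) :: T.erase γ with hL'
      have hpermT : List.Perm T (γ :: T.erase γ) := List.perm_cons_erase hγT
      have hTsum : T.sum = γ + (T.erase γ).sum := by
        rw [hpermT.sum_eq]; simp
      have hsumL' : L'.sum = 0 := by
        simp only [hL', List.sum_cons]
        rw [add_assoc, ← hTsum]
        exact hsum'
      have hmem' : ∀ x ∈ L', x ∈ Φp := by
        intro x hx
        rcases List.mem_cons.mp hx with rfl | hx'
        · exact hbγp
        · exact hmem x (List.mem_cons_of_mem β (List.erase_subset hx'))
      have hlenL' : L'.length = T.length := by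
        simp only [hL', List.length_cons]
        rw [List.length_erase_of_mem hγT]
        have : 1 ≤ T.length := List.length_pos_iff.mpr hTne
        omega
      have hlt : T.length < n := by
        rw [← hlen]
        simp only [List.length_cons]
        omega
      exact IH T.length hlt L' hlenL' hmem' (by simp [hL']) hsumL'

/-- Every positive root is an ℕ-combination of simple roots. -/
lemma pos_root_nat_comb (Φ Φp Δ : Finset V) (h0 : (0 : V) ∉ Φ)
    (hred : ∀ α ∈ Φ, ∀ t : ℝ, t • α ∈ Φ → t = 1 ∨ t = -1)
    (hcart : ∀ α ∈ Φ, ∀ β ∈ Φ, ∃ z : ℤ, 2 * ⟪β, α⟫ / ⟪α, α⟫ = (z : ℝ))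
    (hrefl : ∀ α ∈ Φ, ∀ β ∈ Φ, β - (2 * ⟪β, α⟫ / ⟪α, α⟫) • α ∈ Φ)
    (hpsub : Φp ⊆ Φ)
    (hposneg : ∀ α ∈ Φ, (α ∈ Φp ∧ -α ∉ Φp) ∨ (α ∉ Φp ∧ -α ∈ Φp))
    (hadd : ∀ α ∈ Φp, ∀ β ∈ Φp, α + β ∈ Φ → α + β ∈ Φp)
    (hΔ : ∀ α : V, α ∈ Δ ↔ α ∈ Φp ∧ ¬ ∃ β ∈ Φp, ∃ γ ∈ Φp, α = β + γ) :
    ∀ α ∈ Φp, ∃ e : V → ℕ, α = ∑ β ∈ Δ, (e β : ℝ) • β := by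
  classical
  -- the relation "is obtained from by adding a nonempty list of positive roots"
  let r : {x // x ∈ Φp} → {x // x ∈ Φp} → Prop := fun a b =>
    ∃ L : List V, L ≠ [] ∧ (∀ x ∈ L, x ∈ Φp) ∧ (b : V) = (a : V) + L.sum
  have htrans : ∀ a b c, r a b → r b c → r a c := by
    rintro a b c ⟨L₁, hL₁ne, hL₁m, hL₁⟩ ⟨L₂, hL₂ne, hL₂m, hL₂⟩
    refine ⟨L₁ ++ L₂, by simp [hL₁ne], ?_, ?_⟩
    · intro x hx; rcases List.mem_append.mp hx with h | h
      · exact hL₁m x h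
      · exact hL₂m x h
    · rw [List.sum_append, hL₂, hL₁]; abel
  have hirrefl : ∀ a, ¬ r a a := by
    rintro a ⟨L, hLne, hLm, hL⟩
    have : L.sum = 0 := by
      have := hL
      rwa [left_eq_add] at this
    exact sum_ne_zero Φ Φp h0 hred hcart hrefl hpsub hposneg hadd L.length L rfl hLm hLne this
  haveI : IsTrans {x // x ∈ Φp} r := ⟨htrans⟩
  haveI : IsIrrefl {x // x ∈ Φp} r := ⟨fun a => hirrefl a⟩
  have hwf : WellFounded r := Finite.wellFounded_of_trans_of_irrefl r
  intro α hα
  have key : ∀ a : {x // x ∈ Φp}, ∃ e : V → ℕ, (a : V) = ∑ β ∈ Δ, (e β : ℝ) • β := by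
    intro a
    induction a using hwf.induction with
    | _ a IHa =>
      by_cases hsimple : (a : V) ∈ Δ
      · refine ⟨fun β => if β = (a : V) then 1 else 0, ?_⟩
        rw [Finset.sum_congr rfl (fun β _ => ?_), Finset.sum_ite_eq' Δ (a : V) (fun β => β)]
        · simp [hsimple]
        · rw [show ((if β = (a : V) then (1:ℕ) else 0 : ℕ) : ℝ) • β
            = if β = (a : V) then β else 0 by split <;> simp]
      · have hdecomp := (hΔ (a : V)).not.mp hsimple
        push_neg at hdecomp
        obtain ⟨β, hβp, γ, hγp, habg⟩ := hdecomp a.2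
        have hrb : r ⟨β, hβp⟩ a := ⟨[γ], by simp, by simpa using hγp, by simpa using habg⟩
        have hrc : r ⟨γ, hγp⟩ a := ⟨[β], by simp, by simpa using hβp,
          by simp only [List.sum_cons, List.sum_nil, add_zero]; rw [habg]; abel⟩
        obtain ⟨e₁, he₁⟩ := IHa _ hrb
        obtain ⟨e₂, he₂⟩ := IHa _ hrc
        refine ⟨e₁ + e₂, ?_⟩
        have : (a : V) = β + γ := habg
        rw [this]
        simp only [Pi.add_apply, Nat.cast_add, add_smul, Finset.sum_add_distrib]
        rw [← he₁, ← he₂]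
  exact key ⟨α, hα⟩

/-- Distinct simple roots have nonpositive inner products. -/
lemma simple_inner_nonpos (Φ Φp Δ : Finset V) (h0 : (0 : V) ∉ Φ)
    (hred : ∀ α ∈ Φ, ∀ t : ℝ, t • α ∈ Φ → t = 1 ∨ t = -1)
    (hcart : ∀ α ∈ Φ, ∀ β ∈ Φ, ∃ z : ℤ, 2 * ⟪β, α⟫ / ⟪α, α⟫ = (z : ℝ))
    (hrefl : ∀ α ∈ Φ, ∀ β ∈ Φ, β - (2 * ⟪β, α⟫ / ⟪α, α⟫) • α ∈ Φ)
    (hpsub : Φp ⊆ Φ)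
    (hposneg : ∀ α ∈ Φ, (α ∈ Φp ∧ -α ∉ Φp) ∨ (α ∉ Φp ∧ -α ∈ Φp))
    (hΔ : ∀ α : V, α ∈ Δ ↔ α ∈ Φp ∧ ¬ ∃ β ∈ Φp, ∃ γ ∈ Φp, α = β + γ)
    {α β : V} (hα : α ∈ Δ) (hβ : β ∈ Δ) (hne : α ≠ β) : ⟪α, β⟫ ≤ 0 := by
  by_contra hpos
  push_neg at hpos
  have hαp : α ∈ Φp := ((hΔ α).mp hα).1
  have hβp : β ∈ Φp := ((hΔ β).mp hβ).1
  have hαΦ : α ∈ Φ := hpsub hαp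
  have hβΦ : β ∈ Φ := hpsub hβp
  have hnβΦ : -β ∈ Φ := neg_mem_of_mem h0 hrefl hβΦ
  have hinner : ⟪α, -β⟫ < 0 := by rw [inner_neg_right]; linarith
  have hne0 : α + -β ≠ 0 := by
    intro h
    exact hne (by rw [← sub_eq_zero]; rw [← sub_eq_add_neg] at h; exact h)
  have hmem : α + -β ∈ Φ := add_mem_of_inner_neg h0 hred hcart hrefl hαΦ hnβΦ hinner hne0
  rcases hposneg _ hmem with ⟨hp, _⟩ | ⟨_, hp⟩
  · -- α - β ∈ Φp, so α = (α - β) + β is decomposable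
    exact ((hΔ α).mp hα).2 ⟨α + -β, hp, β, hβp, by abel⟩
  · -- β - α ∈ Φp, so β = (β - α) + α is decomposable
    have : -(α + -β) = β - α := by abel
    rw [this] at hp
    exact ((hΔ β).mp hβ).2 ⟨β - α, hp, α, hαp, by abel⟩

end DWCLB2

/-- For a reduced crystallographic root system `Φ` with positive system `Φp` and simple roots
`Δ` in a real inner product space: if `λ₁, λ₂` are dominant weights with `λ₁ − λ₂` in the
root lattice `Q = ℤ-span of Φ`, then there is a dominant weight `μ` with `μ ≤ λ₁` and
`μ ≤ λ₂` for the dominance order, i.e. both `λ₁ − μ` and `λ₂ − μ` are `ℤ≥0`-combinations of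
simple roots. -/
theorem dominant_weights_common_lower_bound {V : Type*} [NormedAddCommGroup V]
    [InnerProductSpace ℝ V] [FiniteDimensional ℝ V] (Φ Φp Δ : Finset V)
    (hspan : Submodule.span ℝ (Φ : Set V) = ⊤)
    (h0 : (0 : V) ∉ Φ)
    (hred : ∀ α ∈ Φ, ∀ t : ℝ, t • α ∈ Φ → t = 1 ∨ t = -1)
    (hcart : ∀ α ∈ Φ, ∀ β ∈ Φ, ∃ z : ℤ, 2 * ⟪β, α⟫ / ⟪α, α⟫ = (z : ℝ))
    (hrefl : ∀ α ∈ Φ, ∀ β ∈ Φ, β - (2 * ⟪β, α⟫ / ⟪α, α⟫) • α ∈ Φ)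
    (hpsub : Φp ⊆ Φ)
    (hposneg : ∀ α ∈ Φ, (α ∈ Φp ∧ -α ∉ Φp) ∨ (α ∉ Φp ∧ -α ∈ Φp))
    (hadd : ∀ α ∈ Φp, ∀ β ∈ Φp, α + β ∈ Φ → α + β ∈ Φp)
    (hΔ : ∀ α : V, α ∈ Δ ↔ α ∈ Φp ∧ ¬ ∃ β ∈ Φp, ∃ γ ∈ Φp, α = β + γ)
    (lam₁ lam₂ : V)
    (hlam₁ : ∀ α ∈ Φ, ∃ z : ℤ, 2 * ⟪lam₁, α⟫ / ⟪α, α⟫ = (z : ℝ))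
    (hlam₂ : ∀ α ∈ Φ, ∃ z : ℤ, 2 * ⟪lam₂, α⟫ / ⟪α, α⟫ = (z : ℝ))
    (hdom₁ : ∀ α ∈ Φp, 0 ≤ 2 * ⟪lam₁, α⟫ / ⟪α, α⟫)
    (hdom₂ : ∀ α ∈ Φp, 0 ≤ 2 * ⟪lam₂, α⟫ / ⟪α, α⟫)
    (hdiff : lam₁ - lam₂ ∈ AddSubgroup.closure (Φ : Set V)) :
    ∃ μ : V,
      (∀ α ∈ Φ, ∃ z : ℤ, 2 * ⟪μ, α⟫ / ⟪α, α⟫ = (z : ℝ)) ∧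
      (∀ α ∈ Φp, 0 ≤ 2 * ⟪μ, α⟫ / ⟪α, α⟫) ∧
      (∃ c : V → ℕ, lam₁ - μ = ∑ α ∈ Δ, (c α : ℝ) • α) ∧
      (∃ c : V → ℕ, lam₂ - μ = ∑ α ∈ Δ, (c α : ℝ) • α) := by
  classical
  have hcomb : ∀ α ∈ Φp, ∃ e : V → ℕ, α = ∑ β ∈ Δ, (e β : ℝ) • β :=
    DWCLB2.pos_root_nat_comb Φ Φp Δ h0 hred hcart hrefl hpsub hposneg hadd hΔ
  have hΔΦp : ∀ β ∈ Δ, β ∈ Φp := fun β hβ => ((hΔ β).mp hβ).1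
  have hΔΦ : ∀ β ∈ Δ, β ∈ Φ := fun β hβ => hpsub (hΔΦp β hβ)
  -- Step 1 : lam₁ - lam₂ is a difference of two ℕ-combinations of simple roots
  have hP0 : ∃ c d : V → ℕ,
      (∑ α ∈ Δ, (c α : ℝ) • α) - (∑ α ∈ Δ, (d α : ℝ) • α) = lam₁ - lam₂ := by
    have key : ∀ v ∈ AddSubgroup.closure (Φ : Set V), ∃ c d : V → ℕ,
        (∑ α ∈ Δ, (c α : ℝ) • α) - (∑ α ∈ Δ, (d α : ℝ) • α) = v := by
      intro v hv
      induction hv using AddSubgroup.closure_induction with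
      | mem x hx =>
        rcases hposneg x hx with ⟨hp, _⟩ | ⟨_, hp⟩
        · obtain ⟨e, he⟩ := hcomb x hp
          exact ⟨e, 0, by simp [← he]⟩
        · obtain ⟨e, he⟩ := hcomb (-x) hp
          refine ⟨0, e, ?_⟩
          simp only [Pi.zero_apply, Nat.cast_zero, zero_smul, Finset.sum_const_zero]
          rw [← he]; abel
      | zero => exact ⟨0, 0, by simp⟩
      | add x y _ _ hx hy =>
        obtain ⟨c₁, d₁, h₁⟩ := hx
        obtain ⟨c₂, d₂, h₂⟩ := hy
        refine ⟨c₁ + c₂, d₁ + d₂, ?_⟩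
        simp only [Pi.add_apply, Nat.cast_add, add_smul, Finset.sum_add_distrib]
        rw [← h₁, ← h₂]; abel
      | neg x _ hx =>
        obtain ⟨c₁, d₁, h₁⟩ := hx
        exact ⟨d₁, c₁, by rw [← h₁]; abel⟩
    exact key _ hdiff
  obtain ⟨c₀, d₀, hcd₀⟩ := hP0
  -- Step 2 : choose a minimal representative
  set N : Set ℕ := {n | ∃ c d : V → ℕ,
      ((∑ α ∈ Δ, (c α : ℝ) • α) - (∑ α ∈ Δ, (d α : ℝ) • α) = lam₁ - lam₂) ∧
      ∑ α ∈ Δ, c α = n} with hN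
  have hNne : N.Nonempty := ⟨_, c₀, d₀, hcd₀, rfl⟩
  obtain ⟨c, d, hPcd, hcsum⟩ := Nat.sInf_mem hNne
  have hmin : ∀ c' d' : V → ℕ,
      ((∑ α ∈ Δ, (c' α : ℝ) • α) - (∑ α ∈ Δ, (d' α : ℝ) • α) = lam₁ - lam₂) →
      sInf N ≤ ∑ α ∈ Δ, c' α := fun c' d' h => Nat.sInf_le ⟨c', d', h, rfl⟩
  set Sc := ∑ α ∈ Δ, (c α : ℝ) • α with hSc
  set Sd := ∑ α ∈ Δ, (d α : ℝ) • α with hSd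
  set μ := lam₁ - Sc with hμ
  have hμ₁ : lam₁ - μ = Sc := by rw [hμ]; abel
  have hμ₂ : lam₂ - μ = Sd := by
    rw [hμ, show lam₂ - (lam₁ - Sc) = Sc - (lam₁ - lam₂) from by abel, ← hPcd]
    abel
  -- Step 3 : μ is dominant at simple roots
  have hkey : ∀ α₀ ∈ Δ, 0 ≤ ⟪μ, α₀⟫ := by
    intro α₀ hα₀
    by_contra hneg
    push_neg at hneg
    have hα₀p : α₀ ∈ Φp := hΔΦp α₀ hα₀
    have hα₀Φ : α₀ ∈ Φ := hpsub hα₀p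
    have ha₀ : (0:ℝ) < ⟪α₀, α₀⟫ := DWCLB.inner_self_pos_of_mem h0 hα₀Φ
    have main : ∀ (lam : V) (e : V → ℕ), 0 ≤ ⟪lam, α₀⟫ →
        lam - μ = ∑ β ∈ Δ, (e β : ℝ) • β → 1 ≤ e α₀ := by
      intro lam e hdom hexp
      by_contra h1
      push_neg at h1
      have he0 : e α₀ = 0 := by omega
      have hsum_nonpos : ⟪lam - μ, α₀⟫ ≤ 0 := by
        rw [hexp, sum_inner]
        apply Finset.sum_nonpos
        intro β hβ
        rw [real_inner_smul_left]
        by_cases hβα : β = α₀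
        · subst hβα; rw [he0]; simp
        · exact mul_nonpos_of_nonneg_of_nonpos (Nat.cast_nonneg _)
            (DWCLB2.simple_inner_nonpos Φ Φp Δ h0 hred hcart hrefl hpsub hposneg hΔ
              hβ hα₀ hβα)
      rw [inner_sub_left] at hsum_nonpos
      linarith
    have hd₁ : 0 ≤ ⟪lam₁, α₀⟫ := by
      have h := hdom₁ α₀ hα₀p
      have h2 := (le_div_iff₀ ha₀).mp h
      linarith
    have hd₂ : 0 ≤ ⟪lam₂, α₀⟫ := by
      have h := hdom₂ α₀ hα₀p
      have h2 := (le_div_iff₀ ha₀).mp h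
      linarith
    have hc1 : 1 ≤ c α₀ := main lam₁ c hd₁ hμ₁
    have hd1 : 1 ≤ d α₀ := main lam₂ d hd₂ hμ₂
    set c' : V → ℕ := fun β => if β = α₀ then c β - 1 else c β with hc'
    set d' : V → ℕ := fun β => if β = α₀ then d β - 1 else d β with hd'
    have hSc' : ∑ β ∈ Δ, (c' β : ℝ) • β = Sc - α₀ := by
      have hterm : ∀ β ∈ Δ, (c' β : ℝ) • β
          = (c β : ℝ) • β - (if β = α₀ then β else 0) := by
        intro β hβ
        by_cases hb : β = α₀
        · subst hb
          simp [hc', Nat.cast_sub hc1, sub_smul]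
        · simp [hc', hb]
      rw [Finset.sum_congr rfl hterm, Finset.sum_sub_distrib,
        Finset.sum_ite_eq' Δ α₀ (fun β => β), if_pos hα₀]
    have hSd' : ∑ β ∈ Δ, (d' β : ℝ) • β = Sd - α₀ := by
      have hterm : ∀ β ∈ Δ, (d' β : ℝ) • β
          = (d β : ℝ) • β - (if β = α₀ then β else 0) := by
        intro β hβ
        by_cases hb : β = α₀
        · subst hb
          simp [hd', Nat.cast_sub hd1, sub_smul]
        · simp [hd', hb]
      rw [Finset.sum_congr rfl hterm, Finset.sum_sub_distrib,
        Finset.sum_ite_eq' Δ α₀ (fun β => β), if_pos hα₀]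
    have hP' : (∑ α ∈ Δ, (c' α : ℝ) • α) - (∑ α ∈ Δ, (d' α : ℝ) • α) = lam₁ - lam₂ := by
      rw [hSc', hSd', show Sc - α₀ - (Sd - α₀) = Sc - Sd from by abel]
      exact hPcd
    have hsum' : (∑ β ∈ Δ, c' β) + 1 = ∑ β ∈ Δ, c β := by
      have hterm : ∀ β ∈ Δ, c β = c' β + (if β = α₀ then 1 else 0) := by
        intro β hβ
        by_cases hb : β = α₀
        · subst hb; simp [hc']; omega
        · simp [hc', hb]
      rw [Finset.sum_congr rfl hterm, Finset.sum_add_distrib,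
        Finset.sum_ite_eq' Δ α₀ (fun _ => 1), if_pos hα₀]
    have hle := hmin c' d' hP'
    omega
  -- Step 4 : dominance for all positive roots
  have hdomμ : ∀ α ∈ Φp, 0 ≤ 2 * ⟪μ, α⟫ / ⟪α, α⟫ := by
    intro α hαp
    obtain ⟨e, he⟩ := hcomb α hαp
    have hμα : 0 ≤ ⟪μ, α⟫ := by
      rw [he, inner_sum]
      apply Finset.sum_nonneg
      intro β hβ
      rw [real_inner_smul_right]
      exact mul_nonneg (Nat.cast_nonneg _) (hkey β hβ)
    exact div_nonneg (by linarith) real_inner_self_nonneg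
  -- Step 5 : integrality of μ
  have hintμ : ∀ α ∈ Φ, ∃ z : ℤ, 2 * ⟪μ, α⟫ / ⟪α, α⟫ = (z : ℝ) := by
    intro α hα
    obtain ⟨z₁, hz₁⟩ := hlam₁ α hα
    choose f hf using hcart α hα
    refine ⟨z₁ - ∑ β ∈ Δ.attach, (c β.1 : ℤ) * f β.1 (hΔΦ β.1 β.2), ?_⟩
    have hμα : ⟪μ, α⟫ = ⟪lam₁, α⟫ - ∑ β ∈ Δ, (c β : ℝ) * ⟪β, α⟫ := by
      rw [hμ, inner_sub_left, hSc, sum_inner]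
      congr 1
      exact Finset.sum_congr rfl fun β _ => real_inner_smul_left _ _ _
    rw [hμα, mul_sub, sub_div]
    have hexp : 2 * (∑ β ∈ Δ, (c β : ℝ) * ⟪β, α⟫) / ⟪α, α⟫
        = ∑ β ∈ Δ.attach, (c β.1 : ℝ) * ((f β.1 (hΔΦ β.1 β.2) : ℤ) : ℝ) := by
      rw [Finset.mul_sum, Finset.sum_div, ← Finset.sum_attach Δ
        (fun β => 2 * ((c β : ℝ) * ⟪β, α⟫) / ⟪α, α⟫)]
      refine Finset.sum_congr rfl fun β _ => ?_
      rw [← hf β.1 (hΔΦ β.1 β.2)]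
      ring
    rw [hexp, hz₁]
    push_cast
    ring
  refine ⟨μ, hintμ, hdomμ, ⟨c, hμ₁⟩, ⟨d, hμ₂⟩⟩
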